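/- There exists a function f : ℝ → ℝ such that f is continuous on [0,1], f(x) = 0 for every x in the ternary Cantor set, there is an uncountable subset S of the ternary Cantor set such that f cuts the real axis at every point of S, and f is not absolutely continuous on [0,1]. -/

import Mathlib

/-- `f` cuts the real axis at `a` (within `[0,1]`): `f a = 0` and every open interval
around `a` contains points `b, c` of `[0,1]` with `f b < 0` and `f c > 0`. -/
def CutsAxisAt (f : ℝ → ℝ) (a : ℝ) : Prop :=
  f a = 0 ∧ ∀ u v : ℝ, u < a → a < v →
    (∃ b ∈ Set.Ioo u v ∩ Set.Icc (0:ℝ) 1, f b < 0) ∧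
    (∃ c ∈ Set.Ioo u v ∩ Set.Icc (0:ℝ) 1, f c > 0)

/-- `f` is absolutely continuous on `[a, b]`. -/
def AbsolutelyContinuousOn (f : ℝ → ℝ) (a b : ℝ) : Prop :=
  ∀ ε > (0:ℝ), ∃ δ > (0:ℝ), ∀ n : ℕ, ∀ c d : Fin n → ℝ,
    (∀ i, a ≤ c i ∧ c i < d i ∧ d i ≤ b) →
    (Pairwise fun i j => Disjoint (Set.Ioo (c i) (d i)) (Set.Ioo (c j) (d j))) →
    (∑ i, (d i - c i)) < δ →
    (∑ i, |f (d i) - f (c i)|) < ε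


open Real

section CantorAux



lemma preC_subset (n : ℕ) : preCantorSet n ⊆ Set.Icc 0 1 := by
  induction n with
  | zero => simp
  | succ n ih =>
    rintro x (⟨y, hy, rfl⟩ | ⟨y, hy, rfl⟩) <;>
      · obtain ⟨h0, h1⟩ := ih hy
        constructor <;> [linarith; linarith]

lemma mem_cantor_iff {x : ℝ} : x ∈ cantorSet ↔ ∀ n, x ∈ preCantorSet n := Set.mem_iInter

lemma cantor_L {x : ℝ} (hx : x ∈ cantorSet) : x / 3 ∈ cantorSet := by
  rw [mem_cantor_iff] at hx ⊢
  intro n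
  cases n with
  | zero =>
    obtain ⟨h0, h1⟩ := preC_subset 0 (hx 0)
    exact ⟨by linarith, by linarith⟩
  | succ n => exact Or.inl ⟨x, hx n, rfl⟩

lemma cantor_R {x : ℝ} (hx : x ∈ cantorSet) : (2 + x) / 3 ∈ cantorSet := by
  rw [mem_cantor_iff] at hx ⊢
  intro n
  cases n with
  | zero =>
    obtain ⟨h0, h1⟩ := preC_subset 0 (hx 0)
    exact ⟨by linarith, by linarith⟩
  | succ n => exact Or.inr ⟨x, hx n, rfl⟩

lemma one_mem_cantor : (1:ℝ) ∈ cantorSet := by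
  rw [mem_cantor_iff]
  intro n
  induction n with
  | zero => simp
  | succ n ih => exact Or.inr ⟨1, ih, by norm_num⟩

lemma third_mem_cantor : (1/3:ℝ) ∈ cantorSet := by
  have := cantor_L one_mem_cantor
  norm_num at this ⊢
  exact this

lemma two_third_mem_cantor : (2/3:ℝ) ∈ cantorSet := by
  have := cantor_R zero_mem_cantorSet
  norm_num at this ⊢
  exact this

/-- decomposition -/
lemma cantor_decomp {x : ℝ} (hx : x ∈ cantorSet) :
    (3 * x ∈ cantorSet ∧ x ≤ 1/3) ∨ (3 * x - 2 ∈ cantorSet ∧ 2/3 ≤ x) := by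
  rw [mem_cantor_iff] at hx
  rcases hx 1 with ⟨y, hy, rfl⟩ | ⟨y, hy, rfl⟩
  · -- x = y/3 with y ∈ [0,1], so x ≤ 1/3
    obtain ⟨h0, h1⟩ := preC_subset 0 hy
    left
    refine ⟨mem_cantor_iff.2 fun n => ?_, by linarith⟩
    rcases hx (n+1) with ⟨z, hz, hzx⟩ | ⟨z, hz, hzx⟩
    · simp only at hzx
      have : 3 * (y / 3) = z := by rw [← hzx]; ring
      rwa [this]
    · obtain ⟨hz0, hz1⟩ := preC_subset n hz
      simp only at hzx
      nlinarith
  · obtain ⟨h0, h1⟩ := preC_subset 0 hy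
    right
    refine ⟨mem_cantor_iff.2 fun n => ?_, by linarith⟩
    rcases hx (n+1) with ⟨z, hz, hzx⟩ | ⟨z, hz, hzx⟩
    · obtain ⟨hz0, hz1⟩ := preC_subset n hz
      simp only at hzx
      nlinarith
    · simp only at hzx
      have : 3 * ((2 + y) / 3) - 2 = z := by rw [← hzx]; ring
      rwa [this]

lemma cantor_gap0 {x : ℝ} (hx : x ∈ cantorSet) : x ≤ 1/3 ∨ 2/3 ≤ x := by
  rcases cantor_decomp hx with ⟨_, h⟩ | ⟨_, h⟩
  · exact Or.inl h
  · exact Or.inr h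
/-- Near every point of the Cantor set, at every scale, there is a gap with
Cantor endpoints. -/
lemma cantor_gap (n : ℕ) : ∀ a ∈ cantorSet, ∃ g1 g2 : ℝ,
    g1 ∈ cantorSet ∧ g2 ∈ cantorSet ∧ 0 < g1 ∧ g1 < g2 ∧ g2 < 1 ∧
    (∀ x ∈ cantorSet, x ∉ Set.Ioo g1 g2) ∧
    |g1 - a| ≤ (1/3)^n ∧ g2 - g1 ≤ (1/3)^n := by
  induction n with
  | zero =>
    intro a ha
    have ⟨h0, h1⟩ := cantorSet_subset_unitInterval ha
    refine ⟨1/3, 2/3, third_mem_cantor, two_third_mem_cantor, by norm_num, by norm_num,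
      by norm_num, ?_, ?_, by norm_num⟩
    · intro x hx hmem
      rcases cantor_gap0 hx with h | h
      · exact absurd hmem.1 (by linarith)
      · exact absurd hmem.2 (by linarith)
    · rw [abs_le]; constructor <;> simp <;> linarith
  | succ n ih =>
    intro a ha
    rcases cantor_decomp ha with ⟨hb, hle⟩ | ⟨hb, hle⟩
    · obtain ⟨g1, g2, hg1, hg2, hg1pos, hlt, hg2lt, hgap, hclose, hlen⟩ := ih _ hb
      refine ⟨g1/3, g2/3, cantor_L hg1, cantor_L hg2, by linarith, by linarith, by linarith,
        ?_, ?_, ?_⟩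
      · intro x hx ⟨hx1, hx2⟩
        rcases cantor_decomp hx with ⟨hy, _⟩ | ⟨_, hxge⟩
        · exact hgap _ hy ⟨by linarith, by linarith⟩
        · have : g2 / 3 ≤ 1/3 := by linarith
          linarith
      · have he : g1/3 - a = (g1 - 3*a)/3 := by ring
        rw [he, abs_div, abs_of_pos (show (0:ℝ) < 3 by norm_num),
          show ((1:ℝ)/3)^(n+1) = (1/3)^n / 3 by ring]
        linarith
      · rw [show ((1:ℝ)/3)^(n+1) = (1/3)^n / 3 by ring]; linarith
    · obtain ⟨g1, g2, hg1, hg2, hg1pos, hlt, hg2lt, hgap, hclose, hlen⟩ := ih _ hb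
      refine ⟨(2+g1)/3, (2+g2)/3, cantor_R hg1, cantor_R hg2, by linarith, by linarith,
        by linarith, ?_, ?_, ?_⟩
      · intro x hx ⟨hx1, hx2⟩
        rcases cantor_decomp hx with ⟨_, hxle⟩ | ⟨hy, _⟩
        · have : 2/3 < (2+g1)/3 := by linarith
          linarith
        · exact hgap _ hy ⟨by linarith, by linarith⟩
      · have he : (2+g1)/3 - a = (g1 - (3*a-2))/3 := by ring
        rw [he, abs_div, abs_of_pos (show (0:ℝ) < 3 by norm_num),
          show ((1:ℝ)/3)^(n+1) = (1/3)^n / 3 by ring]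
        linarith
      · rw [show ((1:ℝ)/3)^(n+1) = (1/3)^n / 3 by ring]; linarith

noncomputable def dC (x : ℝ) : ℝ := Metric.infDist x cantorSet
noncomputable def fC (x : ℝ) : ℝ := dC x * Real.sin (((dC x)^2)⁻¹)


lemma dC_zero {x : ℝ} (hx : x ∈ cantorSet) : dC x = 0 :=
  Metric.infDist_zero_of_mem hx

lemma fC_zero {x : ℝ} (hx : x ∈ cantorSet) : fC x = 0 := by
  simp [fC, dC_zero hx]

lemma continuous_dC : Continuous dC := Metric.continuous_infDist_pt _

lemma abs_fC_le (x : ℝ) : |fC x| ≤ dC x := by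
  have h0 : 0 ≤ dC x := Metric.infDist_nonneg
  rw [fC, abs_mul, abs_of_nonneg h0]
  nlinarith [abs_sin_le_one (((dC x)^2)⁻¹), abs_nonneg (Real.sin (((dC x)^2)⁻¹))]

lemma continuous_fC : Continuous fC := by
  rw [continuous_iff_continuousAt]
  intro x
  by_cases hx : dC x = 0
  · have : Filter.Tendsto fC (nhds x) (nhds 0) := by
      apply squeeze_zero_norm abs_fC_le
      have := continuous_dC.tendsto x
      rwa [hx] at this
    have hfx : fC x = 0 := by simp [fC, hx]
    rw [ContinuousAt, hfx]
    exact this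
  · apply ContinuousAt.mul continuous_dC.continuousAt
    apply Real.continuous_sin.continuousAt.comp
    apply ContinuousAt.inv₀
    · exact (continuous_dC.pow 2).continuousAt
    · exact pow_ne_zero 2 hx

/-- on the left half of a gap, dC is the distance to the left endpoint -/
lemma dC_gap {g1 g2 t : ℝ} (hg1 : g1 ∈ cantorSet)
    (hgap : ∀ x ∈ cantorSet, x ∉ Set.Ioo g1 g2)
    (ht0 : 0 < t) (ht : t ≤ (g2 - g1)/2) : dC (g1 + t) = t := by
  apply le_antisymm
  · have := Metric.infDist_le_dist_of_mem (x := g1 + t) hg1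
    rwa [Real.dist_eq, show g1 + t - g1 = t by ring, abs_of_pos ht0] at this
  · rw [dC]
    by_contra hcon
    rw [not_le, Metric.infDist_lt_iff ⟨g1, hg1⟩] at hcon
    obtain ⟨y, hy, hd⟩ := hcon
    rw [Real.dist_eq] at hd
    have hge : t ≤ |g1 + t - y| := by
      rcases lt_or_ge y g2 with h | h
      · have : y ≤ g1 := by
          by_contra hc
          exact hgap y hy ⟨lt_of_not_ge hc, h⟩
        calc t ≤ g1 + t - y := by linarith
          _ ≤ |g1 + t - y| := le_abs_self _
      · rw [abs_sub_comm]
        calc t ≤ y - (g1 + t) := by linarith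
          _ ≤ |y - (g1 + t)| := le_abs_self _
    linarith

lemma fC_gap {g1 g2 t : ℝ} (hg1 : g1 ∈ cantorSet)
    (hgap : ∀ x ∈ cantorSet, x ∉ Set.Ioo g1 g2)
    (ht0 : 0 < t) (ht : t ≤ (g2 - g1)/2) :
    fC (g1 + t) = t * Real.sin ((t^2)⁻¹) := by
  rw [fC, dC_gap hg1 hgap ht0 ht]

/-- special point values: t = (√θ)⁻¹ gives sin θ -/
lemma fC_gap_theta {g1 g2 θ : ℝ} (hg1 : g1 ∈ cantorSet)
    (hgap : ∀ x ∈ cantorSet, x ∉ Set.Ioo g1 g2)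
    (hθ : 0 < θ) (ht : (Real.sqrt θ)⁻¹ ≤ (g2 - g1)/2) :
    fC (g1 + (Real.sqrt θ)⁻¹) = (Real.sqrt θ)⁻¹ * Real.sin θ := by
  have hs : 0 < Real.sqrt θ := Real.sqrt_pos.2 hθ
  rw [fC_gap hg1 hgap (by positivity) ht]
  congr 2
  rw [← Real.sq_sqrt hθ.le]
  field_simp
  rw [Real.sqrt_sq hs.le]

lemma not_countable_nat_bool : ¬ Countable (ℕ → Bool) := by
  intro h
  classical
  have hinj : Function.Injective (fun (s : Set ℕ) (n : ℕ) => decide (n ∈ s)) := by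
    intro s t hst
    ext n
    have := congrFun hst n
    simpa using this
  haveI : Countable (Set ℕ) := hinj.countable
  obtain ⟨f, hf⟩ := Countable.exists_injective_nat (Set ℕ)
  exact Function.cantor_injective f hf

lemma pow_third_lt {ε : ℝ} (hε : 0 < ε) : ∃ n : ℕ, ((1:ℝ)/3)^n < ε :=
  exists_pow_lt_of_lt_one hε (by norm_num)

lemma perfect_cantor : Perfect cantorSet := by
  constructor
  · exact isClosed_cantorSet
  · intro x hx
    rw [accPt_iff_nhds]
    intro U hU
    obtain ⟨ε, hε, hball⟩ := Metric.mem_nhds_iff.1 hU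
    obtain ⟨n, hn⟩ := pow_third_lt (show (0:ℝ) < ε/2 by linarith)
    obtain ⟨g1, g2, hg1, hg2, _, hlt, _, _, hclose, hlen⟩ := cantor_gap n x hx
    rcases eq_or_ne g1 x with rfl | hne
    · refine ⟨g2, ⟨hball ?_, hg2⟩, by linarith⟩
      rw [Metric.mem_ball, Real.dist_eq]
      have := abs_sub_abs_le_abs_sub g2 g1
      rw [abs_le] at hclose
      rw [abs_lt]
      constructor <;> nlinarith [pow_pos (show (0:ℝ) < 1/3 by norm_num) n]
    · refine ⟨g1, ⟨hball ?_, hg1⟩, hne⟩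
      rw [Metric.mem_ball, Real.dist_eq]
      calc |g1 - x| ≤ (1/3)^n := hclose
        _ < ε/2 := hn
        _ < ε := by linarith

lemma not_countable_cantor : ¬ cantorSet.Countable := by
  intro h
  obtain ⟨f, hrange, _, hinj⟩ :=
    perfect_cantor.exists_nat_bool_injection ⟨0, zero_mem_cantorSet⟩
  have : (Set.range f).Countable := h.mono hrange
  haveI : Countable (Set.range f) := this.to_subtype
  have hinj' : Function.Injective (Set.rangeFactorization f) := by
    intro a b hab
    exact hinj (congrArg Subtype.val hab)
  exact not_countable_nat_bool hinj'.countable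

/-- choose t ≤ h with sin(angle)=s -/
lemma exists_theta (φ : ℝ) (hφ : 0 ≤ φ) {h : ℝ} (hh : 0 < h) :
    ∃ θ : ℝ, 0 < θ ∧ Real.sin θ = Real.sin φ ∧ 0 < (Real.sqrt θ)⁻¹ ∧ (Real.sqrt θ)⁻¹ ≤ h := by
  obtain ⟨k, hk⟩ := exists_nat_gt ((1/h)^2)
  have hk0 : (0:ℝ) < k := lt_of_le_of_lt (sq_nonneg _) hk
  have hpos : 0 < φ + k * (2 * π) := by nlinarith [Real.pi_gt_three]
  have hθ : (1/h)^2 ≤ φ + k * (2 * π) := by nlinarith [Real.pi_gt_three]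
  have h1 : 1/h ≤ Real.sqrt (φ + k * (2 * π)) := by
    rw [show (1/h : ℝ) = Real.sqrt ((1/h)^2) by rw [Real.sqrt_sq (by positivity)]]
    exact Real.sqrt_le_sqrt hθ
  have h2 : 0 < Real.sqrt (φ + k * (2 * π)) := Real.sqrt_pos.2 hpos
  refine ⟨φ + k * (2 * π), hpos, Real.sin_add_nat_mul_two_pi φ k, by positivity, ?_⟩
  rw [inv_le_comm₀ h2 hh]
  simpa [one_div] using h1

lemma cuts_at_cantor : ∀ a ∈ cantorSet, CutsAxisAt fC a := by
  intro a ha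
  refine ⟨fC_zero ha, ?_⟩
  intro u v hu hv
  obtain ⟨n, hn⟩ := pow_third_lt (show 0 < min (a - u) (v - a) / 2 by
    have h1 : 0 < a - u := by linarith
    have h2 : 0 < v - a := by linarith
    have := lt_min h1 h2
    linarith)
  obtain ⟨g1, g2, hg1, hg2, hg1pos, hlt, hg2lt, hgap, hclose, hlen⟩ := cantor_gap n a ha
  rw [abs_le] at hclose
  have hmin1 : min (a - u) (v - a) / 2 ≤ (a - u) / 2 := by
    have := min_le_left (a - u) (v - a); linarith
  have hmin2 : min (a - u) (v - a) / 2 ≤ (v - a) / 2 := by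
    have := min_le_right (a - u) (v - a); linarith
  have hsub : Set.Ioo g1 g2 ⊆ Set.Ioo u v ∩ Set.Icc 0 1 := by
    intro x ⟨h1, h2⟩
    refine ⟨⟨?_, ?_⟩, by linarith, by linarith⟩
    · nlinarith
    · nlinarith
  have hh : 0 < (g2 - g1)/2 := by linarith
  constructor
  · -- negative point: sin = -1 at φ = π/2 + π
    obtain ⟨θ, hθpos, hθsin, ht0, ht⟩ := exists_theta (π/2 + π) (by positivity) hh
    refine ⟨g1 + (Real.sqrt θ)⁻¹, hsub ⟨by linarith, by linarith⟩, ?_⟩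
    rw [fC_gap_theta hg1 hgap hθpos ht, hθsin, Real.sin_add_pi, Real.sin_pi_div_two]
    nlinarith
  · obtain ⟨θ, hθpos, hθsin, ht0, ht⟩ := exists_theta (π/2) (by positivity) hh
    refine ⟨g1 + (Real.sqrt θ)⁻¹, hsub ⟨by linarith, by linarith⟩, ?_⟩
    rw [fC_gap_theta hg1 hgap hθpos ht, hθsin, Real.sin_pi_div_two]
    nlinarith

noncomputable def aa (k : ℕ) : ℝ := (Real.sqrt (k*π + π/2))⁻¹
noncomputable def bb (k : ℕ) : ℝ := (Real.sqrt (k*π))⁻¹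

lemma hgap13 : ∀ x ∈ cantorSet, x ∉ Set.Ioo (1/3:ℝ) (2/3) := by
  intro x hx ⟨h1, h2⟩
  rcases cantor_gap0 hx with h | h <;> linarith

lemma aa_pos (k : ℕ) : 0 < aa k := by
  rw [aa]
  have : (0:ℝ) < (k:ℝ)*π + π/2 := by positivity
  positivity

lemma bb_pos {k : ℕ} (hk : 1 ≤ k) : 0 < bb k := by
  rw [bb]
  have h1 : (1:ℝ) ≤ (k:ℝ) := by exact_mod_cast hk
  have : (0:ℝ) < (k:ℝ)*π := by nlinarith [Real.pi_pos]
  positivity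

lemma aa_lt_bb {k : ℕ} (hk : 1 ≤ k) : aa k < bb k := by
  rw [aa, bb]
  have hc : (1:ℝ) ≤ (k:ℝ) := by exact_mod_cast hk
  have h0 : (0:ℝ) < (k:ℝ)*π := by nlinarith [Real.pi_pos]
  have h1 : Real.sqrt ((k:ℝ)*π) < Real.sqrt ((k:ℝ)*π + π/2) := by
    apply Real.sqrt_lt_sqrt h0.le
    nlinarith [Real.pi_pos]
  exact inv_strictAnti₀ (Real.sqrt_pos.2 h0) h1

lemma bb_lt_aa_succ (k : ℕ) : bb (k+1) < aa k := by
  rw [aa, bb]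
  have h0 : (0:ℝ) ≤ (k:ℝ)*π + π/2 := by positivity
  have h1 : Real.sqrt ((k:ℝ)*π + π/2) < Real.sqrt ((k+1:ℕ)*π) := by
    apply Real.sqrt_lt_sqrt h0
    push_cast
    nlinarith [Real.pi_pos]
  have h2 : 0 < Real.sqrt ((k:ℝ)*π + π/2) := by
    have : (0:ℝ) < (k:ℝ)*π + π/2 := by positivity
    positivity
  exact inv_strictAnti₀ h2 h1

lemma aa_anti {k m : ℕ} (h : k ≤ m) : aa m ≤ aa k := by
  rw [aa, aa]
  have hc : (k:ℝ) ≤ (m:ℝ) := by exact_mod_cast h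
  have h2 : 0 < Real.sqrt ((k:ℝ)*π + π/2) := by
    have : (0:ℝ) < (k:ℝ)*π + π/2 := by positivity
    positivity
  apply inv_anti₀ h2
  apply Real.sqrt_le_sqrt
  nlinarith [Real.pi_pos]

lemma aa_le_sixth {k : ℕ} (hk : 12 ≤ k) : aa k ≤ 1/6 := by
  rw [aa]
  have hc : (12:ℝ) ≤ (k:ℝ) := by exact_mod_cast hk
  have h36 : (36:ℝ) ≤ (k:ℝ)*π + π/2 := by nlinarith [Real.pi_gt_three]
  have h6 : (6:ℝ) ≤ Real.sqrt ((k:ℝ)*π + π/2) := by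
    rw [show (6:ℝ) = Real.sqrt 36 by rw [show (36:ℝ) = 6^2 by norm_num, Real.sqrt_sq]; norm_num]
    exact Real.sqrt_le_sqrt h36
  calc (Real.sqrt ((k:ℝ)*π + π/2))⁻¹ ≤ 6⁻¹ := by
        apply inv_anti₀ (by norm_num) h6
    _ = 1/6 := by norm_num

lemma bb_le_sixth {k : ℕ} (hk : 12 ≤ k) : bb k ≤ 1/6 := by
  rw [bb]
  have hc : (12:ℝ) ≤ (k:ℝ) := by exact_mod_cast hk
  have h36 : (36:ℝ) ≤ (k:ℝ)*π := by nlinarith [Real.pi_gt_three]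
  have h6 : (6:ℝ) ≤ Real.sqrt ((k:ℝ)*π) := by
    rw [show (6:ℝ) = Real.sqrt 36 by rw [show (36:ℝ) = 6^2 by norm_num, Real.sqrt_sq]; norm_num]
    exact Real.sqrt_le_sqrt h36
  calc (Real.sqrt ((k:ℝ)*π))⁻¹ ≤ 6⁻¹ := by apply inv_anti₀ (by norm_num) h6
    _ = 1/6 := by norm_num

lemma fC_at_aa {k : ℕ} (hk : 12 ≤ k) : fC (1/3 + aa k) = aa k * (-1)^k := by
  have hθ : (0:ℝ) < (k:ℝ)*π + π/2 := by positivity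
  have := fC_gap_theta (θ := (k:ℝ)*π + π/2) third_mem_cantor hgap13 hθ
    (by rw [show ((2:ℝ)/3 - 1/3)/2 = 1/6 by norm_num]; exact aa_le_sixth hk)
  rw [aa] at *
  rw [this]
  congr 1
  rw [show (k:ℝ)*π + π/2 = (k:ℝ)*π - (-(π/2)) by ring, Real.sin_nat_mul_pi_sub]
  simp [Real.sin_pi_div_two]

lemma fC_at_bb {k : ℕ} (hk : 12 ≤ k) : fC (1/3 + bb k) = 0 := by
  have h1 : (1:ℕ) ≤ k := by omega
  have hθ : (0:ℝ) < (k:ℝ)*π := by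
    have : (1:ℝ) ≤ (k:ℝ) := by exact_mod_cast h1
    nlinarith [Real.pi_pos]
  have := fC_gap_theta (θ := (k:ℝ)*π) third_mem_cantor hgap13 hθ
    (by rw [show ((2:ℝ)/3 - 1/3)/2 = 1/6 by norm_num]; exact bb_le_sixth hk)
  rw [bb] at *
  rw [this, Real.sin_nat_mul_pi, mul_zero]

lemma not_AC : ¬ AbsolutelyContinuousOn fC 0 1 := by
  intro H
  obtain ⟨δ, hδ, H⟩ := H 1 one_pos
  obtain ⟨N, hN⟩ := exists_nat_gt ((1/δ)^2 + 12)
  have hN12 : 12 ≤ N := by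
    by_contra h
    push_neg at h
    have : (N:ℝ) < 12 := by exact_mod_cast h
    nlinarith [sq_nonneg (1/δ)]
  have hNδ : (1/δ)^2 < (N:ℝ) := by nlinarith
  set c : Fin (N+1) → ℝ := fun i => 1/3 + bb (N+(i:ℕ)+1) with hc
  set d : Fin (N+1) → ℝ := fun i => 1/3 + aa (N+(i:ℕ)) with hd
  have h1 : ∀ i, (0:ℝ) ≤ c i ∧ c i < d i ∧ d i ≤ 1 := by
    intro i
    have hb := bb_pos (show 1 ≤ N+(i:ℕ)+1 by omega)
    have ha := aa_le_sixth (show 12 ≤ N+(i:ℕ) by omega)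
    have := bb_lt_aa_succ (N+(i:ℕ))
    refine ⟨by simp only [hc]; linarith, by simp only [hc, hd]; linarith,
      by simp only [hd]; linarith⟩
  have key : ∀ i j : Fin (N+1), (i:ℕ) < (j:ℕ) →
      Disjoint (Set.Ioo (c i) (d i)) (Set.Ioo (c j) (d j)) := by
    intro i j hij
    have h1' : aa (N+(j:ℕ)) ≤ aa (N+(i:ℕ)+1) := aa_anti (by omega)
    have h2' : aa (N+(i:ℕ)+1) < bb (N+(i:ℕ)+1) := aa_lt_bb (by omega)
    rw [Set.disjoint_left]
    intro x hx hx'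
    simp only [hc, hd, Set.mem_Ioo] at hx hx'
    linarith [hx.1, hx'.2]
  have h2 : Pairwise fun i j => Disjoint (Set.Ioo (c i) (d i)) (Set.Ioo (c j) (d j)) := by
    intro i j hij
    rcases Ne.lt_or_gt hij with h | h
    · exact key i j h
    · exact (key j i h).symm
  have h3 : (∑ i, (d i - c i)) < δ := by
    have step : (∑ i, (d i - c i)) ≤ ∑ i : Fin (N+1), (bb (N+(i:ℕ)) - bb (N+(i:ℕ)+1)) := by
      apply Finset.sum_le_sum
      intro i _
      simp only [hc, hd]
      have := aa_lt_bb (show 1 ≤ N+(i:ℕ) by omega)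
      linarith
    have tele : ∑ i : Fin (N+1), (bb (N+(i:ℕ)) - bb (N+(i:ℕ)+1)) = bb N - bb (N+(N+1)) := by
      rw [Fin.sum_univ_eq_sum_range (fun i => bb (N+i) - bb (N+i+1)) (N+1)]
      exact Finset.sum_range_sub' (fun i => bb (N+i)) (N+1)
    have hbbN : bb N < δ := by
      rw [bb]
      have h12 : (12:ℝ) ≤ (N:ℝ) := by exact_mod_cast hN12
      have hlt : (1/δ)^2 < (N:ℝ)*π := by nlinarith [Real.pi_gt_three]
      have hs : 1/δ < Real.sqrt ((N:ℝ)*π) := by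
        rw [show (1/δ:ℝ) = Real.sqrt ((1/δ)^2) by rw [Real.sqrt_sq (by positivity)]]
        exact Real.sqrt_lt_sqrt (by positivity) hlt
      have hδ' : 0 < 1/δ := by positivity
      have := inv_strictAnti₀ hδ' hs
      rwa [one_div, inv_inv] at this
    have hlast : 0 < bb (N+(N+1)) := bb_pos (by omega)
    linarith [step, tele.le, tele.ge]
  have hsum := H (N+1) c d h1 h2 h3
  have hval : ∀ i : Fin (N+1), |fC (d i) - fC (c i)| = aa (N+(i:ℕ)) := by
    intro i
    simp only [hc, hd]
    rw [fC_at_aa (show 12 ≤ N+(i:ℕ) by omega), fC_at_bb (show 12 ≤ N+(i:ℕ)+1 by omega),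
      sub_zero, abs_mul, abs_pow, abs_neg, abs_one, one_pow, mul_one,
      abs_of_pos (aa_pos _)]
  have hlow : (1:ℝ) ≤ ∑ i, |fC (d i) - fC (c i)| := by
    have e1 : (∑ i, |fC (d i) - fC (c i)|) = ∑ i : Fin (N+1), aa (N+(i:ℕ)) := by
      apply Finset.sum_congr rfl
      intro i _
      exact hval i
    rw [e1]
    have hterm : ∀ i ∈ Finset.univ, aa (2*N) ≤ aa (N+((i : Fin (N+1)):ℕ)) := by
      intro i _
      apply aa_anti
      omega
    have := Finset.card_nsmul_le_sum Finset.univ (fun i : Fin (N+1) => aa (N+(i:ℕ))) (aa (2*N)) hterm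
    rw [Finset.card_univ, Fintype.card_fin, nsmul_eq_mul] at this
    have haa : (1:ℝ) ≤ ((N:ℝ)+1) * aa (2*N) := by
      rw [aa]
      have hc2 : ((2*N:ℕ):ℝ) = 2*(N:ℝ) := by push_cast; ring
      rw [hc2]
      have hθpos : (0:ℝ) < 2*(N:ℝ)*π + π/2 := by positivity
      have hsq : Real.sqrt (2*(N:ℝ)*π + π/2) ≤ (N:ℝ)+1 := by
        rw [show (N:ℝ)+1 = Real.sqrt (((N:ℝ)+1)^2) by rw [Real.sqrt_sq (by positivity)]]
        apply Real.sqrt_le_sqrt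
        have h12 : (12:ℝ) ≤ (N:ℝ) := by exact_mod_cast hN12
        nlinarith [Real.pi_lt_d2]
      have hsqpos : 0 < Real.sqrt (2*(N:ℝ)*π + π/2) := Real.sqrt_pos.2 hθpos
      have := mul_inv_cancel₀ hsqpos.ne'
      have hmul : Real.sqrt (2*(N:ℝ)*π + π/2) * (Real.sqrt (2*(N:ℝ)*π + π/2))⁻¹
          ≤ ((N:ℝ)+1) * (Real.sqrt (2*(N:ℝ)*π + π/2))⁻¹ := by
        apply mul_le_mul_of_nonneg_right hsq (by positivity)
      rw [this] at hmul
      exact hmul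
    calc (1:ℝ) ≤ ((N:ℝ)+1) * aa (2*N) := haa
      _ ≤ ∑ i : Fin (N+1), aa (N+(i:ℕ)) := by
          have hcast : ((N+1:ℕ):ℝ) = (N:ℝ)+1 := by push_cast; ring
          rw [← hcast]
          exact this
  linarith

end CantorAux

theorem stmt_2 :
    ∃ f : ℝ → ℝ,
      ContinuousOn f (Set.Icc 0 1) ∧
      (∀ x ∈ cantorSet, f x = 0) ∧
      (∃ S : Set ℝ, S ⊆ cantorSet ∧ ¬ S.Countable ∧ ∀ a ∈ S, CutsAxisAt f a) ∧
      ¬ AbsolutelyContinuousOn f 0 1 := by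
  refine ⟨fC, continuous_fC.continuousOn, fun x hx => fC_zero hx,
    ⟨cantorSet, subset_rfl, not_countable_cantor, cuts_at_cantor⟩, not_AC⟩
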